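/- Let X act transitively on a finite set Ω, B a finite perfect centerless group, Y = X ⋉ B^Ω, and M < Y proper maximal clean with π(M) = X. If M ∩ B^Ω ≠ (e) and T := pr_ω(M ∩ B^Ω) is a proper subgroup of B for all ω ∈ Ω, then up to conjugating M one may assume pr_ω(M ∩ B^Ω) = T for all ω, and then M = N_Y(T^Ω) and [Y : M] ≥ [B : T]^{|Ω|}. -/

import Mathlib

open SemidirectProduct

variable (X : Type*) [Group X] (Ω : Type*) (B : Type*) [MulAction X Ω] [Group B]

/-- The action of `X` on `B^Ω` permuting the coordinates. -/
def permAut : X →* MulAut (Ω → B) where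
  toFun x :=
    { toFun := fun f ω => f (x⁻¹ • ω)
      invFun := fun f ω => f (x • ω)
      left_inv := fun f => by ext ω; simp
      right_inv := fun f => by ext ω; simp
      map_mul' := fun f g => rfl }
  map_one' := by ext f ω; simp
  map_mul' := fun x y => by ext f ω; simp [mul_smul]

open Pointwise

section Aux

variable {X Ω B}

@[simp] lemma permAut_apply (x : X) (f : Ω → B) (ω : Ω) :
    (permAut X Ω B x) f ω = f (x⁻¹ • ω) := rfl

@[simp] lemma permAut_inv_apply (x : X) (f : Ω → B) (ω : Ω) :
    ((permAut X Ω B x)⁻¹ : MulAut (Ω → B)) f ω = f (x • ω) := rfl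

local notation "Y" => (Ω → B) ⋊[permAut X Ω B] X

lemma conj_inl (m : Y) (f : Ω → B) :
    m * inl f * m⁻¹ = inl (fun ω => m.left ω * f (m.right⁻¹ • ω) * (m.left ω)⁻¹) := by
  ext ω <;> simp [mul_assoc]

lemma conj_mem_comap (H : Subgroup Y) {m : Y} (hm : m ∈ H) {f : Ω → B}
    (hf : f ∈ Subgroup.comap (inl : (Ω → B) →* Y) H) :
    (fun ω => m.left ω * f (m.right⁻¹ • ω) * (m.left ω)⁻¹) ∈
      Subgroup.comap (inl : (Ω → B) →* Y) H := by
  rw [Subgroup.mem_comap, ← conj_inl]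
  exact mul_mem (mul_mem hm hf) (inv_mem hm)

lemma proj_conj_le (H : Subgroup Y) {m : Y} (hm : m ∈ H) (ω : Ω) {t : B}
    (ht : t ∈ Subgroup.map (Pi.evalMonoidHom (fun _ : Ω => B) (m.right⁻¹ • ω))
      (Subgroup.comap (inl : (Ω → B) →* Y) H)) :
    m.left ω * t * (m.left ω)⁻¹ ∈ Subgroup.map (Pi.evalMonoidHom (fun _ : Ω => B) ω)
      (Subgroup.comap (inl : (Ω → B) →* Y) H) := by
  obtain ⟨f, hf, rfl⟩ := ht
  exact ⟨fun ω' => m.left ω' * f (m.right⁻¹ • ω') * (m.left ω')⁻¹,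
    conj_mem_comap H hm hf, rfl⟩

lemma proj_conj (H : Subgroup Y) {m : Y} (hm : m ∈ H) (ω : Ω) (t : B) :
    t ∈ Subgroup.map (Pi.evalMonoidHom (fun _ : Ω => B) (m.right⁻¹ • ω))
      (Subgroup.comap (inl : (Ω → B) →* Y) H) ↔
    m.left ω * t * (m.left ω)⁻¹ ∈ Subgroup.map (Pi.evalMonoidHom (fun _ : Ω => B) ω)
      (Subgroup.comap (inl : (Ω → B) →* Y) H) := by
  constructor
  · exact proj_conj_le H hm ω
  · intro h
    have h2 := proj_conj_le H (inv_mem hm) (m.right⁻¹ • ω) (t := m.left ω * t * (m.left ω)⁻¹) ?_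
    · have e1 : (m⁻¹).left (m.right⁻¹ • ω) = (m.left ω)⁻¹ := by
        simp [smul_inv_smul]
      rw [e1] at h2
      simpa [mul_assoc] using h2
    · have e2 : ((m⁻¹).right)⁻¹ • (m.right⁻¹ • ω) = ω := by simp
      rw [e2]
      exact h

section SDP
variable {N G : Type*} [Group N] [Group G] {φ : G →* MulAut N}

/-- The underlying type equivalence of a semidirect product with the product. -/
def sdpEquivProd : N ⋊[φ] G ≃ N × G where
  toFun y := (y.left, y.right)
  invFun p := ⟨p.1, p.2⟩
  left_inv := fun ⟨_, _⟩ => rfl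
  right_inv := fun _ => rfl

lemma natCard_sdp : Nat.card (N ⋊[φ] G) = Nat.card N * Nat.card G := by
  rw [Nat.card_congr (sdpEquivProd (φ := φ)), Nat.card_prod]

lemma finite_sdp [Finite N] [Finite G] : Finite (N ⋊[φ] G) :=
  Finite.of_equiv _ (sdpEquivProd (φ := φ)).symm

lemma index_comap_inl_of_surj [Finite N] [Finite G] (H : Subgroup (N ⋊[φ] G))
    (hs : H.map (rightHom : N ⋊[φ] G →* G) = ⊤) :
    H.index = (H.comap (inl : N →* N ⋊[φ] G)).index := by
  haveI : Finite (N ⋊[φ] G) := finite_sdp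
  set K := H.comap (inl : N →* N ⋊[φ] G) with hK
  let ψ : H →* G := rightHom.comp H.subtype
  have hψ : Function.Surjective ψ := by
    intro g
    have hg : g ∈ H.map (rightHom : N ⋊[φ] G →* G) := hs ▸ Subgroup.mem_top g
    obtain ⟨h, hh, rfl⟩ := hg
    exact ⟨⟨h, hh⟩, rfl⟩
  have hker : Nat.card ψ.ker = Nat.card K := by
    refine Nat.card_congr ⟨fun x => ⟨(x : H).1.left, ?_⟩,
      fun k => ⟨⟨inl k.1, k.2⟩, ?_⟩, fun x => ?_, fun k => ?_⟩
    · have hx : ((x : H) : N ⋊[φ] G).right = 1 := x.2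
      have : inl ((x : H) : N ⋊[φ] G).left = ((x : H) : N ⋊[φ] G) := by
        ext <;> simp [hx]
      rw [Subgroup.mem_comap, this]
      exact (x : H).2
    · simp [ψ, MonoidHom.mem_ker]
    · have hx : ((x : H) : N ⋊[φ] G).right = 1 := x.2
      apply Subtype.ext; apply Subtype.ext
      exact SemidirectProduct.ext rfl (by simp [hx])
    · rfl
  have h1 : Nat.card H = Nat.card K * Nat.card G := by
    rw [Subgroup.card_eq_card_quotient_mul_card_subgroup ψ.ker,
      Nat.card_congr (QuotientGroup.quotientKerEquivOfSurjective ψ hψ).toEquiv, hker, mul_comm]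
  have h2 := H.index_mul_card
  have h3 := K.index_mul_card
  have key : H.index * (Nat.card K * Nat.card G) = K.index * (Nat.card K * Nat.card G) := by
    calc H.index * (Nat.card K * Nat.card G) = H.index * Nat.card H := by rw [h1]
      _ = Nat.card N * Nat.card G := by rw [h2, natCard_sdp]
      _ = K.index * Nat.card K * Nat.card G := by rw [h3]
      _ = K.index * (Nat.card K * Nat.card G) := by rw [mul_assoc]
  exact Nat.eq_of_mul_eq_mul_right
    (Nat.mul_pos Nat.card_pos Nat.card_pos) key

end SDP

lemma isCoatom_map_equiv {G : Type*} [Group G] (e : G ≃* G) {M : Subgroup G}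
    (hM : IsCoatom M) : IsCoatom (Subgroup.map e.toMonoidHom M) :=
  (OrderIso.isCoatom_iff (MulEquiv.mapSubgroup e) M).2 hM

end Aux

/-- let `X` act transitively on a finite set `Ω`, `B` a finite perfect
centerless group, `Y = X ⋉ B^Ω`, `M < Y` proper maximal clean with `π(M) = X`.  If
`M ∩ B^Ω ≠ 1` and all the projections `pr_ω(M ∩ B^Ω)` are proper subgroups of `B`,
then after conjugating `M` all those projections are a single proper nontrivial
subgroup `T < B`, `M = N_Y(T^Ω)`, and `[Y : M] ≥ [B : T]^{|Ω|}`. -/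
theorem clean_maximal_proper_proj
    [Fintype X] [Fintype Ω] [Nonempty Ω] [MulAction.IsPretransitive X Ω]
    [Fintype B] [Nontrivial B]
    (hperf : ⁅(⊤ : Subgroup B), (⊤ : Subgroup B)⁆ = ⊤)
    (hz : Subgroup.center B = ⊥)
    (M : Subgroup ((Ω → B) ⋊[permAut X Ω B] X))
    (hM : IsCoatom M)
    (hclean : ∀ N : Subgroup B, N.Normal →
      Subgroup.map (inl : (Ω → B) →* _) (Subgroup.pi Set.univ fun _ : Ω => N) ≤ M →
      N = ⊥)
    (hsurj : M.map (rightHom : _ →* X) = ⊤)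
    (hMB : Subgroup.comap (inl : (Ω → B) →* _) M ≠ ⊥)
    (hproj : ∀ ω : Ω, Subgroup.map (Pi.evalMonoidHom (fun _ : Ω => B) ω)
      (Subgroup.comap (inl : (Ω → B) →* _) M) ≠ ⊤) :
    ∃ (y : (Ω → B) ⋊[permAut X Ω B] X) (T : Subgroup B), T ≠ ⊥ ∧ T ≠ ⊤ ∧
      (∀ ω : Ω, Subgroup.map (Pi.evalMonoidHom (fun _ : Ω => B) ω)
        (Subgroup.comap (inl : (Ω → B) →* _)
          (Subgroup.map (MulAut.conj y).toMonoidHom M)) = T) ∧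
      Subgroup.map (MulAut.conj y).toMonoidHom M =
        Subgroup.normalizer ((Subgroup.map (inl : (Ω → B) →* _)
          (Subgroup.pi Set.univ fun _ : Ω => T) : Subgroup ((Ω → B) ⋊[permAut X Ω B] X)) :
            Set ((Ω → B) ⋊[permAut X Ω B] X)) ∧
      T.index ^ (Fintype.card Ω) ≤ M.index := by
  classical
  haveI : Finite ((Ω → B) ⋊[permAut X Ω B] X) := finite_sdp
  obtain ⟨ω₀⟩ := ‹Nonempty Ω›
  have hc : ∀ ω : Ω, ∃ m : (Ω → B) ⋊[permAut X Ω B] X, m ∈ M ∧ m.right⁻¹ • ω = ω₀ := by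
    intro ω
    obtain ⟨x, hx⟩ := MulAction.exists_smul_eq X ω₀ ω
    have hx' : x ∈ M.map (rightHom : _ →* X) := hsurj ▸ Subgroup.mem_top x
    obtain ⟨m, hm, hmx⟩ := hx'
    refine ⟨m, hm, ?_⟩
    have hmr : m.right = x := hmx
    rw [hmr, ← hx, inv_smul_smul]
  choose mf hmM hmω using hc
  set c : Ω → B := fun ω => ((mf ω).left ω)⁻¹ with hcdef
  have hcω : ∀ ω, c ω = ((mf ω).left ω)⁻¹ := fun _ => rfl
  set y : (Ω → B) ⋊[permAut X Ω B] X := inl c with hydef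
  set T : Subgroup B := Subgroup.map (Pi.evalMonoidHom (fun _ : Ω => B) ω₀)
    (Subgroup.comap (inl : (Ω → B) →* _) M) with hTdef
  set M' := Subgroup.map (MulAut.conj y).toMonoidHom M with hM'def
  have memM' : ∀ z, z ∈ M' ↔ y⁻¹ * z * y ∈ M := by
    intro z
    constructor
    · rintro ⟨m, hm, rfl⟩
      simpa [mul_assoc] using hm
    · intro h
      exact ⟨y⁻¹ * z * y, h, by simp [mul_assoc]⟩
  have memK' : ∀ f : Ω → B, f ∈ Subgroup.comap (inl : (Ω → B) →* _) M' ↔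
      c⁻¹ * f * c ∈ Subgroup.comap (inl : (Ω → B) →* _) M := by
    intro f
    rw [Subgroup.mem_comap, Subgroup.mem_comap, memM']
    have h : y⁻¹ * inl f * y = inl (c⁻¹ * f * c) := by
      rw [hydef, ← map_inv, ← map_mul, ← map_mul]
    rw [h]
  have F2 : ∀ (ω : Ω) (t : B), t ∈ T ↔ (mf ω).left ω * t * ((mf ω).left ω)⁻¹ ∈
      Subgroup.map (Pi.evalMonoidHom (fun _ : Ω => B) ω)
        (Subgroup.comap (inl : (Ω → B) →* _) M) := by
    intro ω t
    have h := proj_conj M (hmM ω) ω t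
    rwa [hmω ω, ← hTdef] at h
  have F3 : ∀ ω : Ω, Subgroup.map (Pi.evalMonoidHom (fun _ : Ω => B) ω)
      (Subgroup.comap (inl : (Ω → B) →* _) M') = T := by
    intro ω
    ext t
    constructor
    · rintro ⟨f, hf, rfl⟩
      have hf' := (memK' f).1 hf
      have h1 : (c⁻¹ * f * c) ω ∈ Subgroup.map (Pi.evalMonoidHom (fun _ : Ω => B) ω)
          (Subgroup.comap (inl : (Ω → B) →* _) M) := ⟨_, hf', rfl⟩
      have h2 : (c⁻¹ * f * c) ω = (mf ω).left ω * f ω * ((mf ω).left ω)⁻¹ := by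
        show (c ω)⁻¹ * f ω * c ω = _
        rw [hcω ω, inv_inv]
      rw [h2] at h1
      exact (F2 ω (f ω)).2 h1
    · intro ht
      obtain ⟨f₀, hf₀, hf₀ω⟩ := (F2 ω t).1 ht
      refine ⟨c * f₀ * c⁻¹, (memK' _).2 (by simpa [mul_assoc] using hf₀), ?_⟩
      show c ω * f₀ ω * (c ω)⁻¹ = t
      have hf₀ω' : f₀ ω = (mf ω).left ω * t * ((mf ω).left ω)⁻¹ := hf₀ω
      rw [hf₀ω', hcω ω]
      group
  have hTtop : T ≠ ⊤ := by rw [hTdef]; exact hproj ω₀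
  have hTbot : T ≠ ⊥ := by
    obtain ⟨⟨f, hf⟩, hne⟩ := Subgroup.ne_bot_iff_exists_ne_one.1 hMB
    have hfne : f ≠ 1 := fun h => hne (Subtype.ext h)
    obtain ⟨ω, hω⟩ : ∃ ω, f ω ≠ 1 := by
      by_contra h
      push_neg at h
      exact hfne (funext fun ω => h ω)
    intro hT
    have h1 : ((mf ω).left ω)⁻¹ * f ω * (mf ω).left ω ∈ T := by
      apply (F2 ω _).2
      have he : (mf ω).left ω * (((mf ω).left ω)⁻¹ * f ω * (mf ω).left ω) * ((mf ω).left ω)⁻¹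
          = f ω := by group
      rw [he]
      exact ⟨f, hf, rfl⟩
    rw [hT, Subgroup.mem_bot] at h1
    apply hω
    have h2 := congrArg (fun z => (mf ω).left ω * z * ((mf ω).left ω)⁻¹) h1
    simpa [mul_assoc] using h2
  have conjT : ∀ m ∈ M', ∀ (ω : Ω) (t : B), t ∈ T ↔ m.left ω * t * (m.left ω)⁻¹ ∈ T := by
    intro m hm ω t
    have h := proj_conj M' hm ω t
    rwa [F3, F3] at h
  set P := Subgroup.map (inl : (Ω → B) →* (Ω → B) ⋊[permAut X Ω B] X)
    (Subgroup.pi Set.univ fun _ : Ω => T) with hPdef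
  have HP : ∀ m ∈ M', ∀ g ∈ P, m * g * m⁻¹ ∈ P := by
    intro m hm g hg
    obtain ⟨f, hf, rfl⟩ := hg
    rw [conj_inl]
    refine ⟨_, ?_, rfl⟩
    intro ω _
    exact (conjT m hm ω _).1 (hf (m.right⁻¹ • ω) trivial)
  have F4 : M' ≤ (Subgroup.normalizer (P : Set ((Ω → B) ⋊[permAut X Ω B] X))) := by
    intro m hm
    rw [Subgroup.mem_normalizer_iff]
    intro g
    constructor
    · exact fun hg => HP m hm g hg
    · intro hg
      have h := HP m⁻¹ (inv_mem hm) _ hg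
      simpa [mul_assoc] using h
  have hM' : IsCoatom M' := isCoatom_map_equiv (MulAut.conj y) hM
  have F5 : (Subgroup.normalizer (P : Set ((Ω → B) ⋊[permAut X Ω B] X))) ≠ ⊤ := by
    intro htop
    haveI hPnormal : P.Normal := Subgroup.normalizer_eq_top_iff.mp htop
    by_cases hPM : P ≤ M'
    · have hTnormal : T.Normal := by
        constructor
        intro t ht b
        have h1 : (inl (fun _ => t) : (Ω → B) ⋊[permAut X Ω B] X) ∈ P :=
          ⟨fun _ => t, fun i _ => ht, rfl⟩
        have h2 := hPnormal.conj_mem _ h1 (inl (fun _ => b))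
        rw [← map_inv, ← map_mul, ← map_mul] at h2
        obtain ⟨g, hg, hgeq⟩ := h2
        have hg' := inl_injective hgeq
        have h3 := hg ω₀ trivial
        rw [hg'] at h3
        simpa using h3
      have hle : Subgroup.map (inl : (Ω → B) →* _) (Subgroup.pi Set.univ fun _ : Ω => T) ≤ M := by
        rintro _ ⟨f, hf, rfl⟩
        have h1 : (c * f * c⁻¹ : Ω → B) ∈ Subgroup.pi Set.univ (fun _ : Ω => T) := by
          intro ω _
          have h := hTnormal.conj_mem _ (hf ω trivial) (c ω)
          simpa using h
        have h2 : (inl (c * f * c⁻¹) : (Ω → B) ⋊[permAut X Ω B] X) ∈ M' := hPM ⟨_, h1, rfl⟩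
        have h3 := (memM' _).1 h2
        have h4 : y⁻¹ * inl (c * f * c⁻¹) * y = inl f := by
          rw [hydef, ← map_inv, ← map_mul, ← map_mul]
          congr 1
          group
        rwa [h4] at h3
      exact hTbot (hclean T hTnormal hle)
    · have hsup : M' ⊔ P = ⊤ :=
        hM'.2 _ (lt_of_le_of_ne le_sup_left fun h => hPM (le_sup_right.trans h.ge))
      obtain ⟨b0, hb0⟩ : ∃ b0 : B, b0 ∉ T := by
        by_contra h
        push_neg at h
        exact hTtop (top_unique fun b _ => h b)
      have hmem : (inl (fun _ => b0) : (Ω → B) ⋊[permAut X Ω B] X) ∈ (M' ⊔ P : Subgroup _) := by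
        rw [hsup]; trivial
      rw [← SetLike.mem_coe, Subgroup.mul_normal] at hmem
      obtain ⟨m, hm, p, hp, hmp⟩ := hmem
      obtain ⟨tv, htv, rfl⟩ := hp
      have hmK : ((fun _ => b0) * tv⁻¹ : Ω → B) ∈ Subgroup.comap (inl : (Ω → B) →* _) M' := by
        rw [Subgroup.mem_comap, map_mul, map_inv]
        have h : (inl (fun _ : Ω => b0) : (Ω → B) ⋊[permAut X Ω B] X) * (inl tv)⁻¹ = m := by
          rw [← hmp]; group
        rw [h]; exact hm
      have h2 : ((fun _ : Ω => b0) * tv⁻¹) ω₀ ∈ T := by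
        rw [← F3 ω₀]
        exact ⟨_, hmK, rfl⟩
      have h3 : b0 ∈ T := by
        have h := mul_mem h2 (htv ω₀ trivial)
        simpa [mul_assoc] using h
      exact hb0 h3
  have F7 : M' = (Subgroup.normalizer (P : Set ((Ω → B) ⋊[permAut X Ω B] X))) := by
    rcases lt_or_eq_of_le F4 with h | h
    · exact absurd (hM'.2 _ h) F5
    · exact h
  have F8 : Subgroup.comap (inl : (Ω → B) →* _) (Subgroup.normalizer (P : Set ((Ω → B) ⋊[permAut X Ω B] X))) =
      Subgroup.pi Set.univ (fun _ : Ω => T) := by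
    apply le_antisymm
    · intro f hf
      rw [Subgroup.mem_comap, ← F7] at hf
      intro ω _
      rw [← F3 ω]
      exact ⟨f, hf, rfl⟩
    · intro f hf
      rw [Subgroup.mem_comap]
      have HQ : ∀ g : Ω → B, g ∈ Subgroup.pi Set.univ (fun _ : Ω => T) →
          ∀ z ∈ P, inl g * z * (inl g)⁻¹ ∈ P := by
        intro g hg z hz
        obtain ⟨tv, htv, rfl⟩ := hz
        rw [← map_inv, ← map_mul, ← map_mul]
        refine ⟨_, ?_, rfl⟩
        intro ω _
        show g ω * tv ω * (g ω)⁻¹ ∈ T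
        exact mul_mem (mul_mem (hg ω trivial) (htv ω trivial)) (inv_mem (hg ω trivial))
      rw [Subgroup.mem_normalizer_iff]
      intro z
      constructor
      · exact HQ f hf z
      · intro hz
        have h := HQ f⁻¹ (inv_mem hf) _ hz
        simpa [mul_assoc] using h
  have hsurj' : M'.map (rightHom : _ →* X) = ⊤ := by
    rw [eq_top_iff]
    intro x _
    have hx : x ∈ M.map (rightHom : _ →* X) := hsurj ▸ Subgroup.mem_top x
    obtain ⟨m, hm, rfl⟩ := hx
    refine ⟨(MulAut.conj y).toMonoidHom m, Subgroup.mem_map_of_mem _ hm, ?_⟩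
    simp [hydef]
  have hNsurj : ((Subgroup.normalizer (P : Set ((Ω → B) ⋊[permAut X Ω B] X)))).map (rightHom : _ →* X) = ⊤ := by
    rw [eq_top_iff, ← hsurj']
    exact Subgroup.map_mono F4
  have hidx1 : M'.index = M.index := by
    rw [hM'def, Subgroup.index_map, (MonoidHom.ker_eq_bot_iff _).2 (MulAut.conj y).injective,
      MonoidHom.range_eq_top.2 (MulAut.conj y).surjective, Subgroup.index_top, sup_bot_eq, mul_one]
  have hidx2 : ((Subgroup.normalizer (P : Set ((Ω → B) ⋊[permAut X Ω B] X)))).index = T.index ^ Fintype.card Ω := by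
    rw [index_comap_inl_of_surj _ hNsurj, F8, Subgroup.index_pi, Finset.prod_const,
      Finset.card_univ]
  refine ⟨y, T, hTbot, hTtop, F3, F7, ?_⟩
  rw [← hidx1, F7, hidx2]
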